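/- Let E_k = [I_k | 0], F_k = [0 | I_k] ∈ ℝ^{k×(k+1)} and let Ŵ = I_k ⊗ (F_k E_k^T) + (E_k F_k^T) ⊗ I_k ∈ ℝ^{k²×k²}. Then the largest singular value of Ŵ equals 2cos(π/(2k)). -/

import Mathlib

open Matrix Kronecker Real

/-- The largest singular value of a real matrix `M`: the supremum of `‖Mv‖₂` over unit
vectors `v`. -/
noncomputable def sigmaMax {m n : Type*} [Fintype m] [Fintype n] (M : Matrix m n ℝ) : ℝ :=
  sSup {r : ℝ | ∃ v : n → ℝ, ∑ j, (v j) ^ 2 = 1 ∧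
    r = Real.sqrt (∑ i, (M.mulVec v i) ^ 2)}

open Finset

namespace SW


noncomputable def gs (k : ℕ) (d : ℤ) : ℝ := Real.sin (d * (Real.pi / (2 * k)))

variable {k : ℕ}

lemma kR_pos (hk : 1 ≤ k) : (0:ℝ) < k := by exact_mod_cast Nat.pos_of_ne_zero (by omega)

lemma x_pos (hk : 1 ≤ k) : 0 < Real.pi / (2 * (k:ℝ)) := by
  apply div_pos Real.pi_pos; linarith [kR_pos hk]

lemma two_x (hk : 1 ≤ k) : 2 * (Real.pi / (2 * (k:ℝ))) = Real.pi / k := by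
  have h := kR_pos hk
  field_simp

lemma kk_x (hk : 1 ≤ k) : (2*(k:ℝ)) * (Real.pi / (2 * (k:ℝ))) = Real.pi := by
  have h := kR_pos hk
  field_simp

lemma gs_rec2 (hk : 1 ≤ k) (d : ℤ) :
    gs k (d-2) + gs k (d+2) = 2 * Real.cos (Real.pi / k) * gs k d := by
  unfold gs
  push_cast
  rw [sub_mul, add_mul, Real.sin_sub, Real.sin_add, ← two_x hk, Real.cos_two_mul, Real.sin_two_mul]
  ring

lemma gs_adj (hk : 1 ≤ k) (d : ℤ) :
    gs k d + gs k (d+2) = 2 * Real.cos (Real.pi / (2*k)) * gs k (d+1) := by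
  unfold gs
  push_cast
  rw [add_mul, add_mul, Real.sin_add, Real.sin_add, Real.cos_two_mul, Real.sin_two_mul,
    one_mul]
  ring

lemma gs_nonneg (hk : 1 ≤ k) {d : ℤ} (h0 : 0 ≤ d) (h1 : d ≤ 2*k) : 0 ≤ gs k d := by
  apply Real.sin_nonneg_of_nonneg_of_le_pi
  · have : (0:ℝ) ≤ (d:ℝ) := by exact_mod_cast h0
    exact mul_nonneg this (x_pos hk).le
  · have h2 : (d:ℝ) ≤ 2*(k:ℝ) := by exact_mod_cast h1
    calc (d:ℝ) * (Real.pi / (2*k)) ≤ (2*(k:ℝ)) * (Real.pi / (2*k)) :=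
          mul_le_mul_of_nonneg_right h2 (x_pos hk).le
      _ = Real.pi := kk_x hk

lemma gs_pos (hk : 1 ≤ k) {d : ℤ} (h0 : 1 ≤ d) (h1 : d ≤ 2*(k:ℤ)-1) : 0 < gs k d := by
  apply Real.sin_pos_of_pos_of_lt_pi
  · have : (1:ℝ) ≤ (d:ℝ) := by exact_mod_cast h0
    exact mul_pos (by linarith) (x_pos hk)
  · have h2 : (d:ℝ) ≤ 2*(k:ℝ) - 1 := by exact_mod_cast h1
    calc (d:ℝ) * (Real.pi / (2*k)) < (2*(k:ℝ)) * (Real.pi / (2*k)) := by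
          apply mul_lt_mul_of_pos_right _ (x_pos hk); linarith
      _ = Real.pi := kk_x hk

lemma cos_x_nonneg (hk : 1 ≤ k) : 0 ≤ Real.cos (Real.pi / (2*(k:ℝ))) := by
  apply Real.cos_nonneg_of_mem_Icc
  constructor
  · linarith [x_pos hk, Real.pi_pos]
  · rw [div_le_div_iff₀ (by linarith [kR_pos hk]) (by norm_num : (0:ℝ) < 2)]
    have := kR_pos hk
    have h1 : (1:ℝ) ≤ k := by exact_mod_cast hk
    nlinarith [Real.pi_pos]

lemma c0_eq (hk : 1 ≤ k) :
    2 + 2 * Real.cos (Real.pi / k) = (2 * Real.cos (Real.pi / (2*(k:ℝ))))^2 := by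
  rw [← two_x hk, Real.cos_two_mul]; ring

lemma c0_nonneg (hk : 1 ≤ k) : 0 ≤ 2 + 2 * Real.cos (Real.pi / (k:ℝ)) := by
  rw [c0_eq hk]; positivity

lemma split_sq (a b p q : ℝ) (hp : 0 < p) (hq : 0 < q) :
    (a+b)^2 ≤ (1 + q/p) * a^2 + (1 + p/q) * b^2 := by
  have key : (1 + q/p) * a^2 + (1 + p/q) * b^2 - (a+b)^2 = (q*a - p*b)^2 / (p*q) := by
    field_simp; ring
  nlinarith [div_nonneg (sq_nonneg (q*a - p*b)) (mul_pos hp hq).le]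


variable {k : ℕ}

noncomputable def ca (k i j : ℕ) : ℝ :=
  if i+1 < k then 1 + gs k ((k:ℤ)+i-j+1) / gs k ((k:ℤ)+i-j-1) else 1

noncomputable def cb (k i j : ℕ) : ℝ :=
  if j+1 < k then 1 + gs k ((k:ℤ)+i-j-1) / gs k ((k:ℤ)+i-j+1) else 1

noncomputable def aa (k i j : ℕ) : ℝ := if 0 < j then ca k i (j-1) else 0

noncomputable def bb (k i j : ℕ) : ℝ := if 0 < i then cb k (i-1) j else 0

variable {k : ℕ}

lemma point_bound (hk : 1 ≤ k) (U : ℕ → ℕ → ℝ)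
    (hU : ∀ i j, k ≤ i ∨ k ≤ j → U i j = 0) {i j : ℕ} (hi : i < k) (hj : j < k) :
    (U i (j+1) + U (i+1) j)^2 ≤ ca k i j * (U i (j+1))^2 + cb k i j * (U (i+1) j)^2 := by
  by_cases hj1 : j+1 < k
  · by_cases hi1 : i+1 < k
    · have hp : 0 < gs k ((k:ℤ)+i-j-1) := gs_pos hk (by omega) (by omega)
      have hq : 0 < gs k ((k:ℤ)+i-j+1) := gs_pos hk (by omega) (by omega)
      rw [ca, cb, if_pos hi1, if_pos hj1]
      exact split_sq _ _ _ _ hp hq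
    · have hz : U (i+1) j = 0 := hU _ _ (Or.inl (by omega))
      rw [hz, ca, if_neg hi1]
      simp
  · have hz : U i (j+1) = 0 := hU _ _ (Or.inr (by omega))
    rw [hz, cb, if_neg hj1]
    simp

lemma shift1 (k : ℕ) (c : ℕ → ℝ) (u : ℕ → ℝ) (hu : u k = 0) :
    ∑ j ∈ range k, c j * (u (j+1))^2
      = ∑ j ∈ range k, (if 0 < j then c (j-1) else 0) * (u j)^2 := by
  have h := Finset.sum_range_succ' (fun j => (if 0 < j then c (j-1) else 0) * (u j)^2) k
  rw [Finset.sum_range_succ] at h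
  simp only [Nat.succ_sub_one, Nat.succ_pos, if_true, if_pos, Nat.lt_irrefl, if_neg,
    Nat.not_lt_zero] at h
  rw [hu] at h
  simp at h
  have hgoal : ∑ j ∈ range k, (if 0 < j then c (j-1) else 0) * (u j)^2
      = ∑ j ∈ range k, (if 0 < j then c (j-1) * (u j)^2 else 0) := by
    apply Finset.sum_congr rfl; intro j _; split_ifs <;> simp
  rw [hgoal]
  linarith [h]

lemma coef_bound (hk : 1 ≤ k) {i j : ℕ} (hi : i < k) (hj : j < k) :
    aa k i j + bb k i j ≤ 2 + 2 * Real.cos (Real.pi / (k:ℝ)) := by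
  have hd1 : (1:ℤ) ≤ (k:ℤ)+i-j := by omega
  have hd2 : (k:ℤ)+i-j ≤ 2*(k:ℤ)-1 := by omega
  have hG : 0 < gs k ((k:ℤ)+i-j) := gs_pos hk hd1 hd2
  have hrec := gs_rec2 hk ((k:ℤ)+i-j)
  have hplus : 0 ≤ gs k ((k:ℤ)+i-j) + gs k ((k:ℤ)+i-j+2) := by
    rw [gs_adj hk]
    exact mul_nonneg (by nlinarith [cos_x_nonneg hk]) (gs_nonneg hk (by omega) (by omega))
  have hminus : 0 ≤ gs k ((k:ℤ)+i-j-2) + gs k ((k:ℤ)+i-j) := by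
    have h := gs_adj hk ((k:ℤ)+i-j-2)
    rw [show (k:ℤ)+i-j-2+2 = (k:ℤ)+i-j by ring, show (k:ℤ)+i-j-2+1 = (k:ℤ)+i-j-1 by ring] at h
    rw [h]
    exact mul_nonneg (by nlinarith [cos_x_nonneg hk]) (gs_nonneg hk (by omega) (by omega))
  rcases Nat.eq_zero_or_pos j with hj0 | hj0
  · rcases Nat.eq_zero_or_pos i with hi0 | hi0
    · simp [aa, bb, hj0, hi0, c0_nonneg hk]
    · -- j = 0, i ≥ 1 : aa = 0, bb = cb (i-1) j
      rw [aa, if_neg (by omega), bb, if_pos hi0, cb]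
      have harg1 : (k:ℤ)+(i-1:ℕ)-(j:ℕ)-1 = (k:ℤ)+i-j-2 := by omega
      have harg2 : (k:ℤ)+(i-1:ℕ)-(j:ℕ)+1 = (k:ℤ)+i-j := by omega
      rw [harg1, harg2]
      by_cases h1k : j+1 < k
      · rw [if_pos h1k]
        have hdiv : gs k ((k:ℤ)+i-j-2) / gs k ((k:ℤ)+i-j) ≤ 1 + 2*Real.cos (Real.pi / (k:ℝ)) := by
          rw [div_le_iff₀ hG]
          nlinarith [hplus, hrec]
        linarith
      · omega
  · rcases Nat.eq_zero_or_pos i with hi0 | hi0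
    · -- i = 0, j ≥ 1 : bb = 0, aa = ca 0 (j-1)
      rw [bb, if_neg (by omega), aa, if_pos hj0, ca]
      have harg1 : (k:ℤ)+(i:ℕ)-(j-1:ℕ)+1 = (k:ℤ)+i-j+2 := by omega
      have harg2 : (k:ℤ)+(i:ℕ)-(j-1:ℕ)-1 = (k:ℤ)+i-j := by omega
      rw [harg1, harg2]
      by_cases h1k : i+1 < k
      · rw [if_pos h1k]
        have hdiv : gs k ((k:ℤ)+i-j+2) / gs k ((k:ℤ)+i-j) ≤ 1 + 2*Real.cos (Real.pi / (k:ℝ)) := by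
          rw [div_le_iff₀ hG]
          nlinarith [hminus, hrec]
        linarith
      · omega
    · -- i ≥ 1, j ≥ 1
      rw [aa, if_pos hj0, bb, if_pos hi0, ca, cb]
      have harg1 : (k:ℤ)+(i:ℕ)-(j-1:ℕ)+1 = (k:ℤ)+i-j+2 := by omega
      have harg2 : (k:ℤ)+(i:ℕ)-(j-1:ℕ)-1 = (k:ℤ)+i-j := by omega
      have harg3 : (k:ℤ)+(i-1:ℕ)-(j:ℕ)-1 = (k:ℤ)+i-j-2 := by omega
      have harg4 : (k:ℤ)+(i-1:ℕ)-(j:ℕ)+1 = (k:ℤ)+i-j := by omega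
      rw [harg1, harg2, harg3, harg4]
      by_cases hik : i+1 < k <;> by_cases hjk : j+1 < k
      · rw [if_pos hik, if_pos hjk]
        have hsum : gs k ((k:ℤ)+i-j+2) / gs k ((k:ℤ)+i-j) + gs k ((k:ℤ)+i-j-2) / gs k ((k:ℤ)+i-j)
            = 2 * Real.cos (Real.pi / (k:ℝ)) := by
          rw [← add_div, div_eq_iff hG.ne']
          linarith [hrec]
        linarith [hsum]
      · rw [if_pos hik, if_neg hjk]
        -- j = k-1 : need gs(d+2)/G ≤ 2 cos; uses gs(d-2) ≥ 0 with d-2 = i-1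
        have hnn : 0 ≤ gs k ((k:ℤ)+i-j-2) := gs_nonneg hk (by omega) (by omega)
        have hdiv : gs k ((k:ℤ)+i-j+2) / gs k ((k:ℤ)+i-j) ≤ 2*Real.cos (Real.pi / (k:ℝ)) := by
          rw [div_le_iff₀ hG]
          nlinarith [hrec, hnn]
        linarith
      · rw [if_neg hik, if_pos hjk]
        have hnn : 0 ≤ gs k ((k:ℤ)+i-j+2) := gs_nonneg hk (by omega) (by omega)
        have hdiv : gs k ((k:ℤ)+i-j-2) / gs k ((k:ℤ)+i-j) ≤ 2*Real.cos (Real.pi / (k:ℝ)) := by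
          rw [div_le_iff₀ hG]
          nlinarith [hrec, hnn]
        linarith
      · rw [if_neg hik, if_neg hjk]
        have hk2 : 2 ≤ k := by omega
        have : Real.pi / (k:ℝ) ≤ Real.pi / 2 := by
          apply div_le_div_of_nonneg_left Real.pi_pos.le (by norm_num)
          exact_mod_cast hk2
        have hc : 0 ≤ Real.cos (Real.pi / (k:ℝ)) := by
          apply Real.cos_nonneg_of_mem_Icc
          constructor
          · have h0 : (0:ℝ) ≤ Real.pi / (k:ℝ) := by positivity
            linarith [Real.pi_pos]
          · exact this
        linarith


lemma core_upper (hk : 1 ≤ k) (U : ℕ → ℕ → ℝ)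
    (hU : ∀ i j, k ≤ i ∨ k ≤ j → U i j = 0) :
    ∑ i ∈ range k, ∑ j ∈ range k, (U i (j+1) + U (i+1) j)^2
      ≤ (2 + 2 * Real.cos (Real.pi / (k:ℝ)))
        * ∑ i ∈ range k, ∑ j ∈ range k, (U i j)^2 := by
  have step1 : ∑ i ∈ range k, ∑ j ∈ range k, (U i (j+1) + U (i+1) j)^2
      ≤ ∑ i ∈ range k, ∑ j ∈ range k,
        (ca k i j * (U i (j+1))^2 + cb k i j * (U (i+1) j)^2) := by
    apply Finset.sum_le_sum; intro i hi
    apply Finset.sum_le_sum; intro j hj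
    exact point_bound hk U hU (mem_range.mp hi) (mem_range.mp hj)
  have stepA : ∑ i ∈ range k, ∑ j ∈ range k, ca k i j * (U i (j+1))^2
      = ∑ i ∈ range k, ∑ j ∈ range k, aa k i j * (U i j)^2 := by
    apply Finset.sum_congr rfl; intro i _
    have := shift1 k (fun j => ca k i j) (fun j => U i j) (hU i k (Or.inr le_rfl))
    simpa [aa] using this
  have stepB : ∑ i ∈ range k, ∑ j ∈ range k, cb k i j * (U (i+1) j)^2
      = ∑ i ∈ range k, ∑ j ∈ range k, bb k i j * (U i j)^2 := by
    rw [Finset.sum_comm]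
    rw [show ∑ i ∈ range k, ∑ j ∈ range k, bb k i j * (U i j)^2
        = ∑ j ∈ range k, ∑ i ∈ range k, bb k i j * (U i j)^2 from Finset.sum_comm]
    apply Finset.sum_congr rfl; intro j _
    have := shift1 k (fun i => cb k i j) (fun i => U i j) (hU k j (Or.inl le_rfl))
    simpa [bb] using this
  have step2 : ∑ i ∈ range k, ∑ j ∈ range k,
        (ca k i j * (U i (j+1))^2 + cb k i j * (U (i+1) j)^2)
      = ∑ i ∈ range k, ∑ j ∈ range k, (aa k i j + bb k i j) * (U i j)^2 := by
    have h1 : ∀ i, ∑ j ∈ range k,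
        (ca k i j * (U i (j+1))^2 + cb k i j * (U (i+1) j)^2)
        = ∑ j ∈ range k, ca k i j * (U i (j+1))^2
          + ∑ j ∈ range k, cb k i j * (U (i+1) j)^2 := fun i => Finset.sum_add_distrib
    calc ∑ i ∈ range k, ∑ j ∈ range k,
        (ca k i j * (U i (j+1))^2 + cb k i j * (U (i+1) j)^2)
        = ∑ i ∈ range k, (∑ j ∈ range k, ca k i j * (U i (j+1))^2
          + ∑ j ∈ range k, cb k i j * (U (i+1) j)^2) := Finset.sum_congr rfl (fun i _ => h1 i)
      _ = ∑ i ∈ range k, ∑ j ∈ range k, ca k i j * (U i (j+1))^2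
          + ∑ i ∈ range k, ∑ j ∈ range k, cb k i j * (U (i+1) j)^2 := Finset.sum_add_distrib
      _ = ∑ i ∈ range k, ∑ j ∈ range k, aa k i j * (U i j)^2
          + ∑ i ∈ range k, ∑ j ∈ range k, bb k i j * (U i j)^2 := by rw [stepA, stepB]
      _ = ∑ i ∈ range k, (∑ j ∈ range k, aa k i j * (U i j)^2
          + ∑ j ∈ range k, bb k i j * (U i j)^2) := Finset.sum_add_distrib.symm
      _ = ∑ i ∈ range k, ∑ j ∈ range k, (aa k i j + bb k i j) * (U i j)^2 := by
          apply Finset.sum_congr rfl; intro i _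
          rw [← Finset.sum_add_distrib]
          apply Finset.sum_congr rfl; intro j _
          ring
  have step3 : ∑ i ∈ range k, ∑ j ∈ range k, (aa k i j + bb k i j) * (U i j)^2
      ≤ ∑ i ∈ range k, ∑ j ∈ range k,
          (2 + 2 * Real.cos (Real.pi / (k:ℝ))) * (U i j)^2 := by
    apply Finset.sum_le_sum; intro i hi
    apply Finset.sum_le_sum; intro j hj
    exact mul_le_mul_of_nonneg_right
      (coef_bound hk (mem_range.mp hi) (mem_range.mp hj)) (sq_nonneg _)
  have step4 : ∑ i ∈ range k, ∑ j ∈ range k,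
        (2 + 2 * Real.cos (Real.pi / (k:ℝ))) * (U i j)^2
      = (2 + 2 * Real.cos (Real.pi / (k:ℝ)))
        * ∑ i ∈ range k, ∑ j ∈ range k, (U i j)^2 := by
    rw [Finset.mul_sum]
    exact Finset.sum_congr rfl (fun i _ => (Finset.mul_sum _ _ _).symm)
  linarith [step1, step2.le, step3, step4.le]


lemma wit_real (m : ℕ) (x : ℝ) (hpi : (2*(m:ℝ)+2) * x = Real.pi) :
    ∑ i ∈ range m, (Real.sin ((2*(i:ℝ)+1)*x) + Real.sin ((2*(i:ℝ)+3)*x))^2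
      = (2 + 2*Real.cos (2*x)) * ∑ i ∈ range (m+1), (Real.sin ((2*(i:ℝ)+1)*x))^2 := by
  set c2 := Real.cos (2*x) with hc2
  set T := ∑ i ∈ range (m+1), (Real.sin ((2*(i:ℝ)+1)*x))^2 with hT
  set S := ∑ i ∈ range m, Real.cos ((4*(i:ℝ)+4)*x) with hS
  have p1 : ∀ i : ℕ, (Real.sin ((2*(i:ℝ)+1)*x) + Real.sin ((2*(i:ℝ)+3)*x))^2
      = (Real.sin ((2*(i:ℝ)+1)*x))^2 + (Real.sin ((2*(i:ℝ)+3)*x))^2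
        + (c2 - Real.cos ((4*(i:ℝ)+4)*x)) := by
    intro i
    have h := Real.two_mul_sin_mul_sin ((2*(i:ℝ)+1)*x) ((2*(i:ℝ)+3)*x)
    rw [show (2*(i:ℝ)+1)*x - (2*(i:ℝ)+3)*x = -(2*x) by ring,
        show (2*(i:ℝ)+1)*x + (2*(i:ℝ)+3)*x = (4*(i:ℝ)+4)*x by ring, Real.cos_neg] at h
    rw [hc2]
    linear_combination h
  have p2 : ∀ i : ℕ, 2*c2*(Real.sin ((2*(i:ℝ)+1)*x))^2
      = c2 - (Real.cos ((4*(i:ℝ)+4)*x) + Real.cos ((4*(i:ℝ))*x))/2 := by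
    intro i
    have h1 := Real.sin_sq_eq_half_sub ((2*(i:ℝ)+1)*x)
    rw [show 2*((2*(i:ℝ)+1)*x) = (4*(i:ℝ)+2)*x by ring] at h1
    have h2 : Real.cos ((4*(i:ℝ)+2)*x + 2*x) + Real.cos ((4*(i:ℝ)+2)*x - 2*x)
        = 2 * Real.cos (2*x) * Real.cos ((4*(i:ℝ)+2)*x) := by
      rw [Real.cos_add, Real.cos_sub]; ring
    rw [show (4*(i:ℝ)+2)*x + 2*x = (4*(i:ℝ)+4)*x by ring,
        show (4*(i:ℝ)+2)*x - 2*x = (4*(i:ℝ))*x by ring] at h2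
    rw [hc2]
    linear_combination 2*Real.cos (2*x) * h1 + (1/2) * h2
  have hA : ∑ i ∈ range m, (Real.sin ((2*(i:ℝ)+1)*x))^2
      = T - (Real.sin ((2*(m:ℝ)+1)*x))^2 := by
    have h := Finset.sum_range_succ (fun i : ℕ => (Real.sin ((2*(i:ℝ)+1)*x))^2) m
    rw [← hT] at h
    linarith [h]
  have hB : ∑ i ∈ range m, (Real.sin ((2*(i:ℝ)+3)*x))^2 = T - (Real.sin x)^2 := by
    have h := Finset.sum_range_succ' (fun i : ℕ => (Real.sin ((2*(i:ℝ)+1)*x))^2) m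
    rw [← hT] at h
    have hc : ∑ i ∈ range m, (fun i : ℕ => (Real.sin ((2*(i:ℝ)+1)*x))^2) (i+1)
        = ∑ i ∈ range m, (Real.sin ((2*(i:ℝ)+3)*x))^2 := by
      apply Finset.sum_congr rfl; intro i _
      simp only []
      congr 2
      push_cast; ring
    rw [hc] at h
    simp only [Nat.cast_zero] at h
    have h0 : (2*(0:ℝ)+1)*x = x := by ring
    rw [h0] at h
    linarith [h]
  have hC : ∑ i ∈ range m, (c2 - Real.cos ((4*(i:ℝ)+4)*x)) = m*c2 - S := by
    rw [Finset.sum_sub_distrib, ← hS, Finset.sum_const, card_range, nsmul_eq_mul]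
  have hLHS : ∑ i ∈ range m, (Real.sin ((2*(i:ℝ)+1)*x) + Real.sin ((2*(i:ℝ)+3)*x))^2
      = 2*T - (Real.sin ((2*(m:ℝ)+1)*x))^2 - (Real.sin x)^2 + (m*c2 - S) := by
    rw [Finset.sum_congr rfl (fun i _ => p1 i)]
    rw [Finset.sum_add_distrib, Finset.sum_add_distrib, hA, hB, hC]
    ring
  have hE : ∑ i ∈ range (m+1), Real.cos ((4*(i:ℝ)+4)*x) = S + 1 := by
    rw [Finset.sum_range_succ, ← hS,
      show (4*(m:ℝ)+4)*x = 2*Real.pi by linear_combination 2*hpi, Real.cos_two_pi]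
  have hF : ∑ i ∈ range (m+1), Real.cos ((4*(i:ℝ))*x) = 1 + S := by
    have h := Finset.sum_range_succ' (fun i : ℕ => Real.cos ((4*(i:ℝ))*x)) (m)
    rw [h]
    have hc : ∑ i ∈ range m, (fun i : ℕ => Real.cos ((4*(i:ℝ))*x)) (i+1)
        = ∑ i ∈ range m, Real.cos ((4*(i:ℝ)+4)*x) := by
      apply Finset.sum_congr rfl; intro i _
      simp only []
      congr 1
      push_cast; ring
    rw [hc, ← hS]
    norm_num
    exact add_comm S 1
  have hRHS2 : 2*c2*T = ((m:ℝ)+1)*c2 - ((S+1) + (1+S))/2 := by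
    rw [hT, Finset.mul_sum]
    rw [Finset.sum_congr rfl (fun i _ => p2 i)]
    rw [Finset.sum_sub_distrib, Finset.sum_const, card_range, nsmul_eq_mul]
    have hsplit : ∑ i ∈ range (m+1), (Real.cos ((4*(i:ℝ)+4)*x) + Real.cos ((4*(i:ℝ))*x))/2
        = ((S+1) + (1+S))/2 := by
      rw [← Finset.sum_div, Finset.sum_add_distrib, hE, hF]
    rw [hsplit]
    push_cast
    ring
  have hs : Real.sin ((2*(m:ℝ)+1)*x) = Real.sin x := by
    rw [show (2*(m:ℝ)+1)*x = Real.pi - x by linear_combination hpi, Real.sin_pi_sub]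
  have hss : 2*(Real.sin x)^2 = 1 - c2 := by
    have h := Real.sin_sq_eq_half_sub x
    rw [← hc2] at h
    linarith [h]
  rw [hLHS, hs]
  have expand : (2+2*c2)*T = 2*T + 2*c2*T := by ring
  rw [expand]
  linarith [hRHS2, hss]


variable {k : ℕ}

lemma gs_sin (k : ℕ) (d : ℤ) :
    gs k d = Real.sin ((d:ℝ) * (Real.pi / (2 * (k:ℝ)))) := by
  simp [gs]

lemma witness_eq (hk : 1 ≤ k) :
    ∑ i ∈ range (k-1), (gs k (2*(i:ℤ)+1) + gs k (2*(i:ℤ)+3))^2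
      = (2 + 2*Real.cos (Real.pi/(k:ℝ))) * ∑ i ∈ range k, (gs k (2*(i:ℤ)+1))^2 := by
  obtain ⟨m, rfl⟩ : ∃ m, k = m+1 := ⟨k-1, by omega⟩
  have hx : (2*(m:ℝ)+2) * (Real.pi/(2*(((m+1:ℕ)):ℝ))) = Real.pi := by
    have hne1 : (((m+1:ℕ)):ℝ) ≠ 0 := by positivity
    push_cast at hne1 ⊢
    field_simp
  have h := wit_real m (Real.pi/(2*(((m+1:ℕ)):ℝ))) hx
  have hg1 : ∀ i:ℕ, gs (m+1) (2*(i:ℤ)+1)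
      = Real.sin ((2*(i:ℝ)+1)*(Real.pi/(2*(((m+1:ℕ)):ℝ)))) := by
    intro i; rw [gs_sin]; congr 1; push_cast; ring
  have hg3 : ∀ i:ℕ, gs (m+1) (2*(i:ℤ)+3)
      = Real.sin ((2*(i:ℝ)+3)*(Real.pi/(2*(((m+1:ℕ)):ℝ)))) := by
    intro i; rw [gs_sin]; congr 1; push_cast; ring
  have hcos : Real.cos (Real.pi/((m+1:ℕ):ℝ))
      = Real.cos (2*(Real.pi/(2*(((m+1:ℕ)):ℝ)))) := by
    rw [two_x (by omega : 1 ≤ m+1)]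
  simp only [Nat.add_sub_cancel]
  calc ∑ i ∈ range m, (gs (m+1) (2*(i:ℤ)+1) + gs (m+1) (2*(i:ℤ)+3))^2
      = ∑ i ∈ range m, (Real.sin ((2*(i:ℝ)+1)*(Real.pi/(2*(((m+1:ℕ)):ℝ))))
          + Real.sin ((2*(i:ℝ)+3)*(Real.pi/(2*(((m+1:ℕ)):ℝ)))))^2 := by
        apply Finset.sum_congr rfl; intro i _; rw [hg1, hg3]
    _ = (2 + 2*Real.cos (2*(Real.pi/(2*(((m+1:ℕ)):ℝ)))))
          * ∑ i ∈ range (m+1), (Real.sin ((2*(i:ℝ)+1)*(Real.pi/(2*(((m+1:ℕ)):ℝ)))))^2 := h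
    _ = (2 + 2*Real.cos (Real.pi/((m+1:ℕ):ℝ)))
          * ∑ i ∈ range (m+1), (gs (m+1) (2*(i:ℤ)+1))^2 := by
        rw [hcos]
        congr 1
        apply Finset.sum_congr rfl; intro i _; rw [hg1]

noncomputable def N2 (k : ℕ) : ℝ := ∑ l ∈ range k, (gs k (2*(l:ℤ)+1))^2

lemma N2_pos (hk : 1 ≤ k) : 0 < N2 k := by
  apply Finset.sum_pos'
  · intro i _; positivity
  · refine ⟨0, mem_range.mpr (by omega), ?_⟩
    have : 0 < gs k (2*((0:ℕ):ℤ)+1) := by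
      apply gs_pos hk <;> omega
    positivity

noncomputable def Wit (k : ℕ) (i j : ℕ) : ℝ :=
  if i + j + 1 = k then gs k (2*(i:ℤ)+1) / Real.sqrt (N2 k) else 0

lemma wit_zero (i j : ℕ) (h : k ≤ i ∨ k ≤ j) : Wit k i j = 0 := by
  rw [Wit, if_neg (by omega)]

lemma wit_norm (hk : 1 ≤ k) : ∑ i ∈ range k, ∑ j ∈ range k, (Wit k i j)^2 = 1 := by
  have hinner : ∀ i ∈ range k,
      ∑ j ∈ range k, (Wit k i j)^2 = (gs k (2*(i:ℤ)+1) / Real.sqrt (N2 k))^2 := by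
    intro i hi
    have hi' := mem_range.mp hi
    rw [Finset.sum_eq_single_of_mem (k-i-1) (mem_range.mpr (by omega))]
    · rw [Wit, if_pos (by omega)]
    · intro b _ hb
      rw [Wit, if_neg (by omega)]
      norm_num
  rw [Finset.sum_congr rfl hinner]
  have : ∑ i ∈ range k, (gs k (2*(i:ℤ)+1) / Real.sqrt (N2 k))^2
      = (∑ i ∈ range k, (gs k (2*(i:ℤ)+1))^2) / (Real.sqrt (N2 k))^2 := by
    rw [Finset.sum_div]
    apply Finset.sum_congr rfl; intro i _
    rw [div_pow]
  rw [this, Real.sq_sqrt (N2_pos hk).le]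
  exact div_self (N2_pos hk).ne'

lemma wit_shift (hk : 1 ≤ k) :
    ∑ i ∈ range k, ∑ j ∈ range k, (Wit k i (j+1) + Wit k (i+1) j)^2
      = 2 + 2*Real.cos (Real.pi/(k:ℝ)) := by
  have claim : ∀ i j : ℕ, Wit k i (j+1) + Wit k (i+1) j
      = if i+j+2 = k then (gs k (2*(i:ℤ)+1) + gs k (2*(i:ℤ)+3)) / Real.sqrt (N2 k) else 0 := by
    intro i j
    by_cases h : i+j+2 = k
    · rw [Wit, Wit, if_pos (by omega), if_pos (by omega), if_pos h]
      rw [show (2*((i+1:ℕ):ℤ)+1) = 2*(i:ℤ)+3 by push_cast; ring]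
      rw [← add_div]
    · rw [Wit, Wit, if_neg (by omega), if_neg (by omega), if_neg h]
      norm_num
  have hinner : ∀ i ∈ range k,
      ∑ j ∈ range k, (Wit k i (j+1) + Wit k (i+1) j)^2
      = if i+2 ≤ k then ((gs k (2*(i:ℤ)+1) + gs k (2*(i:ℤ)+3)) / Real.sqrt (N2 k))^2 else 0 := by
    intro i hi
    have hi' := mem_range.mp hi
    by_cases hik : i+2 ≤ k
    · rw [if_pos hik]
      rw [Finset.sum_eq_single_of_mem (k-i-2) (mem_range.mpr (by omega))]
      · rw [claim, if_pos (by omega)]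
      · intro b _ hb
        rw [claim, if_neg (by omega)]
        norm_num
    · rw [if_neg hik]
      apply Finset.sum_eq_zero
      intro b _
      rw [claim, if_neg (by omega)]
      norm_num
  rw [Finset.sum_congr rfl hinner]
  obtain ⟨m, rfl⟩ : ∃ m, k = m+1 := ⟨k-1, by omega⟩
  rw [Finset.sum_range_succ, if_neg (by omega), add_zero]
  have : ∀ i ∈ range m, (if i+2 ≤ m+1 then
      ((gs (m+1) (2*(i:ℤ)+1) + gs (m+1) (2*(i:ℤ)+3)) / Real.sqrt (N2 (m+1)))^2 else 0)
      = ((gs (m+1) (2*(i:ℤ)+1) + gs (m+1) (2*(i:ℤ)+3)))^2 / (Real.sqrt (N2 (m+1)))^2 := by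
    intro i hi
    rw [if_pos (by rw [mem_range] at hi; omega), div_pow]
  rw [Finset.sum_congr rfl this, ← Finset.sum_div, Real.sq_sqrt (N2_pos hk).le]
  have hw := witness_eq hk
  simp only [Nat.add_sub_cancel] at hw
  rw [hw]
  rw [show ∑ i ∈ range (m+1), (gs (m+1) (2*(i:ℤ)+1))^2 = N2 (m+1) from rfl]
  rw [mul_div_assoc, div_self (N2_pos hk).ne', mul_one]


lemma fin_to_range {β : Type*} [AddCommMonoid β] {k : ℕ} (g : Fin k → β) :
    ∑ i : Fin k, g i = ∑ i ∈ range k, (if h : i < k then g ⟨i, h⟩ else 0) := by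
  have h := Fin.sum_univ_eq_sum_range (fun i => if h : i < k then g ⟨i, h⟩ else 0) k
  rw [← h]
  apply Finset.sum_congr rfl
  intro i _
  rw [dif_pos i.isLt]


end SW

open SW

/-- With `E_k = [I_k | 0]`, `F_k = [0 | I_k]`, the matrix
`Ŵ = I_k ⊗ (F_k E_kᵀ) + (E_k F_kᵀ) ⊗ I_k` has largest singular value `2cos(π/(2k))`. -/
theorem sigmaMax_What (k : ℕ) (hk : 1 ≤ k)
    (E F : Matrix (Fin k) (Fin (k + 1)) ℝ)
    (hE : ∀ i j, E i j = if (j : ℕ) = (i : ℕ) then 1 else 0)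
    (hF : ∀ i j, F i j = if (j : ℕ) = (i : ℕ) + 1 then 1 else 0) :
    sigmaMax ((1 : Matrix (Fin k) (Fin k) ℝ) ⊗ₖ (F * Eᵀ) +
        (E * Fᵀ) ⊗ₖ (1 : Matrix (Fin k) (Fin k) ℝ)) =
      2 * Real.cos (Real.pi / (2 * k)) := by
  classical
  set M : Matrix (Fin k × Fin k) (Fin k × Fin k) ℝ :=
    (1 : Matrix (Fin k) (Fin k) ℝ) ⊗ₖ (F * Eᵀ) + (E * Fᵀ) ⊗ₖ (1 : Matrix (Fin k) (Fin k) ℝ)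
    with hMdef
  have hFE : ∀ (a b : Fin k), (F * Eᵀ) a b = if (b:ℕ) = (a:ℕ)+1 then 1 else 0 := by
    intro a b
    rw [Matrix.mul_apply]
    rcases eq_or_ne ((b:ℕ)) ((a:ℕ)+1) with h | h
    · rw [if_pos h]
      rw [Finset.sum_eq_single (⟨(a:ℕ)+1, by omega⟩ : Fin (k+1))]
      · simp [hE, hF, h]
      · intro l _ hl
        have hln : (l:ℕ) ≠ (a:ℕ)+1 := fun hc => hl (by apply Fin.ext; simpa using hc)
        simp [hF, hln]
      · intro hc; exact absurd (Finset.mem_univ _) hc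
    · rw [if_neg h]
      apply Finset.sum_eq_zero
      intro l _
      simp only [Matrix.transpose_apply, hE, hF]
      by_cases h1 : (l:ℕ) = (a:ℕ)+1 <;> by_cases h2 : (l:ℕ) = (b:ℕ) <;>
        simp [h1, h2] <;> omega
  have hEF : ∀ (a b : Fin k), (E * Fᵀ) a b = if (a:ℕ) = (b:ℕ)+1 then 1 else 0 := by
    intro a b
    rw [Matrix.mul_apply]
    rcases eq_or_ne ((a:ℕ)) ((b:ℕ)+1) with h | h
    · rw [if_pos h]
      rw [Finset.sum_eq_single (⟨(a:ℕ), by omega⟩ : Fin (k+1))]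
      · simp [hE, hF, h]
      · intro l _ hl
        have hln : (l:ℕ) ≠ (a:ℕ) := fun hc => hl (by apply Fin.ext; simpa using hc)
        simp [hE, hln]
      · intro hc; exact absurd (Finset.mem_univ _) hc
    · rw [if_neg h]
      apply Finset.sum_eq_zero
      intro l _
      simp only [Matrix.transpose_apply, hE, hF]
      by_cases h1 : (l:ℕ) = (a:ℕ) <;> by_cases h2 : (l:ℕ) = (b:ℕ)+1 <;>
        simp [h1, h2] <;> omega
  have hMul : ∀ (v : Fin k × Fin k → ℝ) (i j : Fin k),
      M.mulVec v (i,j) = (if h : (j:ℕ)+1 < k then v (i, ⟨(j:ℕ)+1, h⟩) else 0)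
        + (if h : 0 < (i:ℕ) then v (⟨(i:ℕ)-1, by omega⟩, j) else 0) := by
    intro v i j
    have hterm : ∀ p : Fin k × Fin k, M (i,j) p * v p
        = (if i = p.1 ∧ (p.2:ℕ) = (j:ℕ)+1 then v p else 0)
          + (if (i:ℕ) = (p.1:ℕ)+1 ∧ j = p.2 then v p else 0) := by
      intro p
      have e1 : M (i,j) p = (1 : Matrix (Fin k) (Fin k) ℝ) i p.1 * (F*Eᵀ) j p.2
          + (E*Fᵀ) i p.1 * (1 : Matrix (Fin k) (Fin k) ℝ) j p.2 := rfl
      rw [e1, hFE j p.2, hEF i p.1, Matrix.one_apply, Matrix.one_apply,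
        ite_zero_mul_ite_zero, ite_zero_mul_ite_zero, add_mul, ite_mul, ite_mul]
      simp
    show ∑ p : Fin k × Fin k, M (i,j) p * v p = _
    rw [Finset.sum_congr rfl (fun p _ => hterm p), Finset.sum_add_distrib]
    congr 1
    · by_cases h : (j:ℕ)+1 < k
      · rw [dif_pos h]
        rw [Finset.sum_eq_single ((i, ⟨(j:ℕ)+1, h⟩) : Fin k × Fin k)]
        · rw [if_pos ⟨rfl, rfl⟩]
        · rintro ⟨p1, p2⟩ _ hp
          rw [if_neg]
          rintro ⟨h1, h2⟩
          dsimp only at h1 h2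
          apply hp
          rw [Prod.mk.injEq]
          exact ⟨h1.symm, by apply Fin.ext; simp only [Fin.val_mk]; omega⟩
        · intro hc; exact absurd (Finset.mem_univ _) hc
      · rw [dif_neg h]
        apply Finset.sum_eq_zero
        intro p _
        rw [if_neg]
        rintro ⟨h1, h2⟩
        exact h (h2 ▸ p.2.isLt)
    · by_cases h : 0 < (i:ℕ)
      · rw [dif_pos h]
        rw [Finset.sum_eq_single ((⟨(i:ℕ)-1, by omega⟩, j) : Fin k × Fin k)]
        · rw [if_pos ⟨by simp; omega, rfl⟩]
        · rintro ⟨p1, p2⟩ _ hp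
          rw [if_neg]
          rintro ⟨h1, h2⟩
          dsimp only at h1 h2
          apply hp
          rw [Prod.mk.injEq]
          refine ⟨by apply Fin.ext; simp only [Fin.val_mk]; omega, h2.symm⟩
        · intro hc; exact absurd (Finset.mem_univ _) hc
      · rw [dif_neg h]
        apply Finset.sum_eq_zero
        intro p _
        rw [if_neg]
        rintro ⟨h1, h2⟩
        omega
  have hcnn : 0 ≤ 2 * Real.cos (Real.pi / (2*(k:ℝ))) := by
    have := cos_x_nonneg hk; linarith
  set Uof : (Fin k × Fin k → ℝ) → ℕ → ℕ → ℝ := fun v a b =>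
    if h : a < k ∧ b < k then v (⟨k-1-a, by omega⟩, ⟨b, h.2⟩) else 0 with hUof
  have hU0 : ∀ v a b, k ≤ a ∨ k ≤ b → Uof v a b = 0 := by
    intro v a b h; rw [hUof]; exact dif_neg (by omega)
  have hbridge1 : ∀ v : Fin k × Fin k → ℝ,
      ∑ p : Fin k × Fin k, (v p)^2 = ∑ a ∈ range k, ∑ b ∈ range k, (Uof v a b)^2 := by
    intro v
    rw [Fintype.sum_prod_type]
    rw [fin_to_range (fun i : Fin k => ∑ j : Fin k, (v (i,j))^2)]
    rw [← Finset.sum_range_reflect]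
    apply Finset.sum_congr rfl
    intro a ha
    have ha' := mem_range.mp ha
    rw [dif_pos (by omega : k - 1 - a < k)]
    rw [fin_to_range (fun j : Fin k => (v (⟨k-1-a, by omega⟩, j))^2)]
    apply Finset.sum_congr rfl
    intro b hb
    have hb' := mem_range.mp hb
    rw [dif_pos hb']
    rw [show Uof v a b = v (⟨k-1-a, by omega⟩, ⟨b, hb'⟩) from dif_pos ⟨ha', hb'⟩]
  have hbridge2 : ∀ v : Fin k × Fin k → ℝ,
      ∑ p : Fin k × Fin k, (M.mulVec v p)^2
        = ∑ a ∈ range k, ∑ b ∈ range k, (Uof v a (b+1) + Uof v (a+1) b)^2 := by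
    intro v
    rw [Fintype.sum_prod_type]
    rw [fin_to_range (fun i : Fin k => ∑ j : Fin k, (M.mulVec v (i,j))^2)]
    rw [← Finset.sum_range_reflect]
    apply Finset.sum_congr rfl
    intro a ha
    have ha' := mem_range.mp ha
    rw [dif_pos (by omega : k - 1 - a < k)]
    rw [fin_to_range (fun j : Fin k => (M.mulVec v (⟨k-1-a, by omega⟩, j))^2)]
    apply Finset.sum_congr rfl
    intro b hb
    have hb' := mem_range.mp hb
    rw [dif_pos hb']
    have hval : M.mulVec v (⟨k-1-a, by omega⟩, ⟨b, hb'⟩)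
        = Uof v a (b+1) + Uof v (a+1) b := by
      rw [hMul v ⟨k-1-a, by omega⟩ ⟨b, hb'⟩]
      congr 1
      · by_cases hb1 : b+1 < k
        · rw [dif_pos hb1, show Uof v a (b+1) = v (⟨k-1-a, by omega⟩, ⟨b+1, hb1⟩)
            from dif_pos ⟨ha', hb1⟩]
        · rw [dif_neg hb1, show Uof v a (b+1) = 0 from dif_neg (by omega)]
      · by_cases hik : a+1 < k
        · rw [dif_pos (show 0 < k-1-a by omega),
            show Uof v (a+1) b = v (⟨k-1-(a+1), by omega⟩, ⟨b, hb'⟩)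
              from dif_pos ⟨hik, hb'⟩]
          congr 1
        · rw [dif_neg (show ¬ 0 < k-1-a by omega),
            show Uof v (a+1) b = 0 from dif_neg (by omega)]
    rw [hval]
  -- upper bound
  have hub : ∀ r ∈ {r : ℝ | ∃ v : Fin k × Fin k → ℝ, ∑ j, (v j) ^ 2 = 1 ∧
      r = Real.sqrt (∑ i, (M.mulVec v i) ^ 2)}, r ≤ 2 * Real.cos (Real.pi / (2 * k)) := by
    rintro r ⟨v, hv1, rfl⟩
    have h1 : ∑ p : Fin k × Fin k, (M.mulVec v p)^2
        ≤ 2 + 2 * Real.cos (Real.pi / (k:ℝ)) := by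
      rw [hbridge2 v]
      calc ∑ a ∈ range k, ∑ b ∈ range k, (Uof v a (b+1) + Uof v (a+1) b)^2
          ≤ (2 + 2 * Real.cos (Real.pi / (k:ℝ)))
            * ∑ a ∈ range k, ∑ b ∈ range k, (Uof v a b)^2 :=
            core_upper hk (Uof v) (hU0 v)
        _ = 2 + 2 * Real.cos (Real.pi / (k:ℝ)) := by
            rw [← hbridge1 v, hv1, mul_one]
    calc Real.sqrt (∑ p : Fin k × Fin k, (M.mulVec v p)^2)
        ≤ Real.sqrt (2 + 2 * Real.cos (Real.pi / (k:ℝ))) := Real.sqrt_le_sqrt h1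
      _ = 2 * Real.cos (Real.pi / (2 * k)) := by
          rw [c0_eq hk, Real.sqrt_sq hcnn]
  -- witness membership
  have hmem : (2 * Real.cos (Real.pi / (2 * k))) ∈ {r : ℝ | ∃ v : Fin k × Fin k → ℝ,
      ∑ j, (v j) ^ 2 = 1 ∧ r = Real.sqrt (∑ i, (M.mulVec v i) ^ 2)} := by
    set w : Fin k × Fin k → ℝ := fun p => Wit k (k-1-(p.1:ℕ)) (p.2:ℕ) with hwdef
    have hUW : ∀ a b : ℕ, Uof w a b = Wit k a b := by
      intro a b
      by_cases h : a < k ∧ b < k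
      · rw [show Uof w a b = w (⟨k-1-a, by omega⟩, ⟨b, h.2⟩) from dif_pos h, hwdef]
        show Wit k (k-1-(k-1-a)) b = Wit k a b
        rw [show k-1-(k-1-a) = a by omega]
      · rw [show Uof w a b = 0 from dif_neg h, wit_zero a b (by omega)]
    refine ⟨w, ?_, ?_⟩
    · rw [hbridge1 w]
      rw [Finset.sum_congr rfl (fun a _ => Finset.sum_congr rfl
        (fun b _ => by rw [hUW a b]))]
      exact wit_norm hk
    · rw [hbridge2 w]
      rw [Finset.sum_congr rfl (fun a _ => Finset.sum_congr rfl
        (fun b _ => by rw [hUW a (b+1), hUW (a+1) b]))]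
      rw [wit_shift hk, c0_eq hk, Real.sqrt_sq hcnn]
  rw [sigmaMax]
  apply le_antisymm
  · exact csSup_le ⟨_, hmem⟩ hub
  · exact le_csSup ⟨_, hub⟩ hmem
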